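/- If u is an associative Lyndon–Shirshov word and w is any word properly containing u as a subword (w = a u b with a, b not both empty) such that w is also an associative Lyndon–Shirshov word, then in the Lyndon factorization c = c_1...c_k (c_1 ≤ ... ≤ c_k) of the word c defined by Shirshov's Lemma ([w] = [a [uc] d] with b = cd), each c_i satisfies c_i < u in the lexicographic order. -/

import Mathlib

noncomputable section

variable {X : Type*} [LinearOrder X] (k : Type*) [Field k]

def llt : List X → List X → Prop
  | [], _ => False
  | _ :: _, [] => True
  | a :: u, b :: v => a < b ∨ (a = b ∧ llt u v)

def IsLS (w : List X) : Prop :=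
  w ≠ [] ∧ ∀ u v : List X, u ≠ [] → v ≠ [] → w = u ++ v → llt (v ++ u) w

/-- deg-lex order -/
def dlt (u v : List X) : Prop :=
  u.length < v.length ∨ (u.length = v.length ∧ llt u v)

/-- the free associative algebra with basis the free monoid on X -/
abbrev FA (k : Type*) [Field k] (X : Type*) := MonoidAlgebra k (FreeMonoid X)

/-- the generators x ∈ X inside the free associative algebra -/
def gens : Set (FA k X) := Set.range fun x : X => MonoidAlgebra.single (FreeMonoid.of x) (1 : k)

/-- the leading (deg-lex maximal) monomial of f is w -/
def IsLeading (f : FA k X) (w : List X) : Prop :=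
  f.coeff (FreeMonoid.ofList w) ≠ 0 ∧ ∀ v : List X, f.coeff (FreeMonoid.ofList v) ≠ 0 → v = w ∨ dlt v w

/-- underlying associative word of a nonassociative word -/
def mword : FreeMagma X → List X
  | .of x => [x]
  | .mul a b => mword a ++ mword b

/-- evaluation of a nonassociative word in the free associative algebra
via the commutator bracket -/
def evalM : FreeMagma X → FA k X
  | .of x => MonoidAlgebra.single (FreeMonoid.of x) 1
  | .mul a b => evalM a * evalM b - evalM b * evalM a

/-- nonassociative Lyndon--Shirshov word -/
def IsNLS : FreeMagma X → Prop
  | .of _ => True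
  | .mul a b => IsNLS a ∧ IsNLS b ∧ IsLS (mword a ++ mword b) ∧
      (match a with
        | .of _ => True
        | .mul _ a2 => ¬ llt (mword b) (mword a2))

/-- standard bracketing tree: at each node the right factor is the longest
proper Lyndon--Shirshov suffix -/
def IsStd : FreeMagma X → Prop
  | .of _ => True
  | .mul a b => IsStd a ∧ IsStd b ∧ IsLS (mword a ++ mword b) ∧ IsLS (mword b) ∧
      ∀ s : List X, s ≠ [] → s ≠ mword a ++ mword b → s <:+ mword a ++ mword b →
        IsLS s → s.length ≤ (mword b).length

/-- flattening of a tree of trees -/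
def mjoin : FreeMagma (FreeMagma X) → FreeMagma X
  | .of t => t
  | .mul a b => .mul (mjoin a) (mjoin b)

/-- the list of leaves of a binary tree -/
def leaves {α : Type*} : FreeMagma α → List α
  | .of x => [x]
  | .mul a b => leaves a ++ leaves b

/-- `Occurs s t p` : `s` occurs as a subtree of `t` with exactly the word `p`
to its left -/
def Occurs (s : FreeMagma X) : FreeMagma X → List X → Prop
  | .of x, p => s = .of x ∧ p = []
  | .mul l r, p => (s = .mul l r ∧ p = []) ∨ Occurs s l p ∨
      ∃ q, Occurs s r q ∧ p = mword l ++ q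



lemma llt_nil (v : List X) : ¬ llt [] v := by simp [llt]

lemma llt_irrefl (x : List X) : ¬ llt x x := by
  induction x with
  | nil => simp [llt]
  | cons a t ih => simp [llt, ih]

lemma llt_trans : ∀ {x y z : List X}, llt x y → llt y z → llt x z := by
  intro x
  induction x with
  | nil => intro y z h; exact absurd h (llt_nil y)
  | cons a t ih =>
    intro y z h1 h2
    cases y with
    | nil => exact absurd h2 (llt_nil z)
    | cons b s =>
      cases z with
      | nil => trivial
      | cons c r =>
        rcases h1 with h1 | ⟨rfl, h1⟩ <;> rcases h2 with h2 | ⟨rfl, h2⟩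
        · exact Or.inl (h1.trans h2)
        · exact Or.inl h1
        · exact Or.inl h2
        · exact Or.inr ⟨rfl, ih h1 h2⟩

lemma llt_trichotomy (x y : List X) : x = y ∨ llt x y ∨ llt y x := by
  induction x generalizing y with
  | nil =>
    cases y with
    | nil => exact Or.inl rfl
    | cons b s => exact Or.inr (Or.inr trivial)
  | cons a t ih =>
    cases y with
    | nil => exact Or.inr (Or.inl trivial)
    | cons b s =>
      rcases lt_trichotomy a b with h | rfl | h
      · exact Or.inr (Or.inl (Or.inl h))
      · rcases ih s with rfl | h | h
        · exact Or.inl rfl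
        · exact Or.inr (Or.inl (Or.inr ⟨rfl, h⟩))
        · exact Or.inr (Or.inr (Or.inr ⟨rfl, h⟩))
      · exact Or.inr (Or.inr (Or.inl h))

lemma llt_asymm {x y : List X} (h : llt x y) : ¬ llt y x :=
  fun h' => llt_irrefl x (llt_trans h h')

lemma llt_append_left (x : List X) {s : List X} (hs : s ≠ []) : llt (x ++ s) x := by
  induction x with
  | nil => cases s with | nil => exact absurd rfl hs | cons c r => trivial
  | cons a t ih => exact Or.inr ⟨rfl, ih⟩

lemma llt_cancel {x u v : List X} : llt (x ++ u) (x ++ v) ↔ llt u v := by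
  induction x with
  | nil => rfl
  | cons a t ih => simp [llt, ih]

lemma key2 : ∀ {x y : List X}, llt x y → ¬ y <+: x → ∀ (a b : List X), llt (x ++ a) (y ++ b) := by
  intro x
  induction x with
  | nil => intro y h; exact absurd h (llt_nil y)
  | cons c t ih =>
    intro y h hp a b
    cases y with
    | nil => exact absurd (List.nil_prefix) hp
    | cons d s =>
      rcases h with h | ⟨rfl, h⟩
      · exact Or.inl h
      · refine Or.inr ⟨rfl, ih h ?_ a b⟩
        intro hps
        exact hp (List.cons_prefix_cons.mpr ⟨rfl, hps⟩)

lemma llt_of_append (p : List X) : ∀ {q w : List X}, llt (q ++ p) w → llt q w ∨ q <+: w := by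
  intro q
  induction q with
  | nil => intro w _; exact Or.inr List.nil_prefix
  | cons a t ih =>
    intro w h
    cases w with
    | nil => exact Or.inl trivial
    | cons b s =>
      rcases h with h | ⟨rfl, h⟩
      · exact Or.inl (Or.inl h)
      · rcases ih h with h' | h'
        · exact Or.inl (Or.inr ⟨rfl, h'⟩)
        · exact Or.inr (List.cons_prefix_cons.mpr ⟨rfl, h'⟩)

lemma llt_of_append_same {s : List X} :
    ∀ {p q : List X}, p.length = q.length → llt (p ++ s) (q ++ s) → llt p q := by
  intro p
  induction p with
  | nil =>
    intro q hl h
    cases q with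
    | nil => exact absurd h (llt_irrefl s)
    | cons b t => simp at hl
  | cons a t ih =>
    intro q hl h
    cases q with
    | nil => simp at hl
    | cons b r =>
      rcases h with h | ⟨rfl, h⟩
      · exact Or.inl h
      · exact Or.inr ⟨rfl, ih (by simpa using hl) h⟩

lemma isLS_singleton (x : X) : IsLS [x] := by
  refine ⟨by simp, fun u v hu hv h => ?_⟩
  exfalso
  have := congrArg List.length h
  simp at this
  have h1 : 1 ≤ u.length := List.length_pos_iff.mpr hu
  have h2 : 1 ≤ v.length := List.length_pos_iff.mpr hv
  omega

lemma isLS_unbordered {w s : List X} (hw : IsLS w) (hpre : s <+: w) (hsuf : s <:+ w)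
    (hne : s ≠ []) (hnew : s ≠ w) : False := by
  obtain ⟨p, hp⟩ := hpre
  obtain ⟨q, hq⟩ := hsuf
  have hpne : p ≠ [] := by rintro rfl; simp at hp; exact hnew hp
  have hqne : q ≠ [] := by rintro rfl; simp at hq; exact hnew hq
  have h1 : llt (p ++ s) w := hw.2 s p hne hpne hp.symm
  have h2 : llt (s ++ q) w := hw.2 q s hqne hne hq.symm
  rw [← hp] at h2
  have h2' : llt q p := llt_cancel.mp h2
  rw [← hq] at h1
  have hlen : p.length = q.length := by
    have := congrArg List.length hp
    have := congrArg List.length hq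
    simp at *
    omega
  have h1' : llt p q := llt_of_append_same hlen h1
  exact llt_asymm h1' h2'

lemma isLS_suffix_lt {w s : List X} (hw : IsLS w) (hsuf : s <:+ w) (hne : s ≠ [])
    (hnew : s ≠ w) : llt s w := by
  obtain ⟨p, hp⟩ := hsuf
  have hpne : p ≠ [] := by rintro rfl; simp at hp; exact hnew hp
  have h1 : llt (s ++ p) w := hw.2 p s hpne hne hp.symm
  rcases llt_of_append p h1 with h | h
  · exact h
  · exact absurd (isLS_unbordered hw h ⟨p, hp⟩ hne hnew) (by simp)

lemma isLS_of_suffix {w : List X} (hne : w ≠ [])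
    (H : ∀ s, s <:+ w → s ≠ [] → s ≠ w → llt s w) : IsLS w := by
  refine ⟨hne, fun u v hu hv h => ?_⟩
  have hvw : v ≠ w := by
    rintro rfl
    have hlen := congrArg List.length h
    rw [List.length_append] at hlen
    have h1 : 1 ≤ u.length := List.length_pos_iff.mpr hu
    omega
  have h1 : llt v w := H v ⟨u, h.symm⟩ hv hvw
  have h2 : ¬ w <+: v := by
    intro hp
    have hl := hp.length_le
    have hlen := congrArg List.length h
    rw [List.length_append] at hlen
    have h1 : 1 ≤ u.length := List.length_pos_iff.mpr hu
    omega
  have := key2 h1 h2 u []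
  simpa using this

lemma isLS_append {p q : List X} (hp : IsLS p) (hq : IsLS q) (hqp : llt q p) :
    IsLS (p ++ q) := by
  have hpq : llt q (p ++ q) := by
    by_cases hpre : p <+: q
    · obtain ⟨r, hr⟩ := hpre
      have hrne : r ≠ [] := by
        rintro rfl; rw [List.append_nil] at hr; subst hr; exact llt_irrefl p hqp
      have hrq : r ≠ q := by
        rintro rfl
        have hlen := congrArg List.length hr
        rw [List.length_append] at hlen
        exact hp.1 (List.length_eq_zero_iff.mp (by omega))
      have h1 : llt r q := isLS_suffix_lt hq ⟨p, hr⟩ hrne hrq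
      rw [← hr]
      exact llt_cancel.mpr (hr ▸ h1)
    · have := key2 hqp hpre [] q
      simpa using this
  have hsq : ∀ s', s' <:+ q → s' ≠ [] → llt s' (p ++ q) := by
    intro s' hs hne
    by_cases hsq : s' = q
    · subst hsq; exact hpq
    · exact llt_trans (isLS_suffix_lt hq hs hne hsq) hpq
  refine isLS_of_suffix (by simp [hp.1]) ?_
  intro s hsuf hne hnew
  obtain ⟨r, hr⟩ := hsuf
  rcases List.append_eq_append_iff.mp hr with ⟨a', ha1, ha2⟩ | ⟨c', _, hc2⟩
  · by_cases ha : a' = []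
    · subst ha; simp at ha2; subst ha2; exact hpq
    · have hap : a' ≠ p := by rintro rfl; exact hnew ha2
      have hasuf : a' <:+ p := ⟨r, ha1.symm⟩
      have h1 : llt a' p := isLS_suffix_lt hp hasuf ha hap
      have h2 : ¬ p <+: a' := by
        intro hpa
        exact hap (hpa.eq_of_length (le_antisymm hpa.length_le hasuf.length_le)).symm
      subst ha2
      exact key2 h1 h2 q q
  · exact hsq s ⟨c', hc2.symm⟩ hne

lemma isLS_straddle {u1 u2 b : List X} (h1 : u1 ≠ []) (h2 : u2 ≠ [])
    (hu : IsLS (u1 ++ u2)) (hw : IsLS (u2 ++ b)) : IsLS (u1 ++ (u2 ++ b)) := by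
  have hlt2 : llt u2 (u1 ++ u2) := by
    refine isLS_suffix_lt hu ⟨u1, rfl⟩ h2 ?_
    intro h
    have hlen := congrArg List.length h
    rw [List.length_append] at hlen
    exact h1 (List.length_eq_zero_iff.mp (by omega))
  have hW : llt (u2 ++ b) (u1 ++ (u2 ++ b)) := by
    have hnp : ¬ (u1 ++ u2) <+: u2 := by
      intro hp
      have := hp.length_le
      rw [List.length_append] at this
      exact h1 (List.length_eq_zero_iff.mp (by omega))
    have := key2 hlt2 hnp b b
    rwa [List.append_assoc] at this
  refine isLS_of_suffix (by simp [h1]) ?_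
  intro s hsuf hne hnew
  obtain ⟨r, hr⟩ := hsuf
  rcases List.append_eq_append_iff.mp hr with ⟨a', ha1, ha2⟩ | ⟨c', _, hc2⟩
  · by_cases ha : a' = []
    · subst ha; simp at ha2; subst ha2; exact hW
    · have hane : a' ≠ u1 := by rintro rfl; exact hnew ha2
      have hasuf : a' <:+ u1 := ⟨r, ha1.symm⟩
      have halen : a'.length < u1.length := by
        rcases lt_or_eq_of_le hasuf.length_le with h | h
        · exact h
        · exact absurd ((List.suffix_iff_eq_drop.mp hasuf).trans (by simp [h])) hane
      have hsu : a' ++ u2 <:+ u1 ++ u2 := by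
        obtain ⟨r', hr'⟩ := hasuf
        exact ⟨r', by rw [← List.append_assoc, hr']⟩
      have hlt : llt (a' ++ u2) (u1 ++ u2) := by
        refine isLS_suffix_lt hu hsu (by simp [h2]) ?_
        intro h
        have := congrArg List.length h
        simp [List.length_append] at this
        omega
      have hnp : ¬ (u1 ++ u2) <+: (a' ++ u2) := by
        intro hp
        have := hp.length_le
        simp [List.length_append] at this
        omega
      have := key2 hlt hnp b b
      rw [List.append_assoc, List.append_assoc] at this
      rwa [ha2]
  · have hsw : s <:+ u2 ++ b := ⟨c', hc2.symm⟩
    by_cases hs : s = u2 ++ b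
    · subst hs; exact hW
    · exact llt_trans (isLS_suffix_lt hw hsw hne hs) hW

lemma isStd_isLS : ∀ {t : FreeMagma X}, IsStd t → IsLS (mword t)
  | .of x, _ => isLS_singleton x
  | .mul a b, h => h.2.2.1

lemma occurs_self : ∀ t : FreeMagma X, Occurs t t []
  | .of x => ⟨rfl, rfl⟩
  | .mul a b => Or.inl ⟨rfl, rfl⟩

lemma cflInsert : ∀ cs : List (List X), List.Chain' (fun p q => ¬ llt q p) cs →
    (∀ x ∈ cs, IsLS x) → ∀ p : List X, IsLS p →
    ∃ cs' : List (List X), (∀ x ∈ cs', IsLS x) ∧ List.Chain' (fun p q => ¬ llt q p) cs' ∧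
      cs'.flatten = p ++ cs.flatten := by
  intro cs
  induction cs with
  | nil => intro _ _ p hp; exact ⟨[p], by simpa using hp, List.isChain_singleton p, by simp⟩
  | cons q rest ih =>
    intro hch hls p hp
    by_cases hqp : llt q p
    · obtain ⟨cs', h1, h2, h3⟩ := ih hch.tail (fun x hx => hls x (List.mem_cons_of_mem _ hx))
        (p ++ q) (isLS_append hp (hls q (List.mem_cons_self)) hqp)
      exact ⟨cs', h1, h2, by rw [h3]; simp [List.append_assoc]⟩
    · refine ⟨p :: q :: rest, ?_, ?_, by simp⟩
      · intro x hx
        rcases List.mem_cons.mp hx with rfl | hx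
        · exact hp
        · exact hls x hx
      · exact List.isChain_cons_cons.mpr ⟨hqp, hch⟩

lemma cfl (c : List X) : ∃ cs : List (List X), (∀ x ∈ cs, IsLS x) ∧
    List.Chain' (fun p q => ¬ llt q p) cs ∧ cs.flatten = c := by
  induction c with
  | nil => exact ⟨[], by simp, List.isChain_nil, by simp⟩
  | cons x c' ih =>
    obtain ⟨cs, h1, h2, h3⟩ := ih
    obtain ⟨cs', g1, g2, g3⟩ := cflInsert cs h2 h1 [x] (isLS_singleton x)
    exact ⟨cs', g1, g2, by rw [g3, h3]; rfl⟩

lemma maxlast : ∀ cs : List (List X), List.Chain' (fun p q => ¬ llt q p) cs → cs ≠ [] →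
    ∃ ck ∈ cs, ck <:+ cs.flatten ∧ ∀ x ∈ cs, ¬ llt ck x := by
  intro cs
  induction cs with
  | nil => intro _ h; exact absurd rfl h
  | cons a rest ih =>
    intro hch _
    cases rest with
    | nil =>
      refine ⟨a, List.mem_cons_self, by simp, ?_⟩
      intro x hx
      rcases List.mem_cons.mp hx with rfl | hx
      · exact llt_irrefl x
      · simp at hx
    | cons b t =>
      obtain ⟨hab, hch'⟩ := List.isChain_cons_cons.mp hch
      obtain ⟨ck, hm, hs, hmax⟩ := ih hch' (by simp)
      refine ⟨ck, List.mem_cons_of_mem _ hm, hs.trans (by simpa using List.suffix_append a ((b :: t).flatten)), ?_⟩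
      intro x hx
      rcases List.mem_cons.mp hx with rfl | hx
      · intro h
        have hbck := hmax b (List.mem_cons_self)
        rcases llt_trichotomy x b with rfl | h' | h'
        · exact hbck h
        · exact hbck (llt_trans h h')
        · exact hab h'
      · exact hmax x hx

lemma tailCFL {w u c : List X} (hw : IsLS w) (hu : IsLS u) (h : w = u ++ c) :
    ∃ cs : List (List X), (∀ x ∈ cs, IsLS x) ∧
      List.Chain' (fun p q => ¬ llt q p) cs ∧ cs.flatten = c ∧ ∀ ci ∈ cs, llt ci u := by
  obtain ⟨cs, h1, h2, h3⟩ := cfl c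
  refine ⟨cs, h1, h2, h3, ?_⟩
  by_cases hcs : cs = []
  · subst hcs; simp
  obtain ⟨ck, hm, hsuf, hmax⟩ := maxlast cs h2 hcs
  rw [h3] at hsuf
  have hckne : ck ≠ [] := (h1 ck hm).1
  have hcne : c ≠ [] := by
    rintro rfl
    exact hckne (List.suffix_nil.mp hsuf)
  have hckw : llt ck w := by
    refine isLS_suffix_lt hw (hsuf.trans ⟨u, h.symm⟩) hckne ?_
    intro hckweq
    have l1 := hsuf.length_le
    have hlen := congrArg List.length h
    rw [List.length_append] at hlen
    have : 1 ≤ u.length := List.length_pos_iff.mpr hu.1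
    rw [hckweq] at l1; omega
  have hwu : llt w u := h ▸ llt_append_left u hcne
  have hcku : llt ck u := llt_trans hckw hwu
  intro ci hci
  rcases llt_trichotomy ci ck with rfl | h' | h'
  · exact hcku
  · exact llt_trans h' hcku
  · exact absurd h' (hmax ci hci)

lemma baseCase {t : FreeMagma X} (hstd : IsStd t) {u b : List X} (hu : IsLS u)
    (hm : mword t = u ++ b) :
    ∃ c d : List X, b = c ++ d ∧
      ∃ s : FreeMagma X, Occurs s t [] ∧ mword s = u ++ c ∧
        ∃ cs : List (List X), (∀ x ∈ cs, IsLS x) ∧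
          List.Chain' (fun p q => ¬ llt q p) cs ∧ cs.flatten = c ∧
          ∀ ci ∈ cs, llt ci u :=
  ⟨b, [], (List.append_nil b).symm, t, occurs_self t, hm,
    tailCFL (isStd_isLS hstd) hu hm⟩

lemma shirshov_main : ∀ t : FreeMagma X, IsStd t → ∀ a u b : List X, IsLS u →
    mword t = a ++ u ++ b →
    ∃ c d : List X, b = c ++ d ∧
      ∃ s : FreeMagma X, Occurs s t a ∧ mword s = u ++ c ∧
        ∃ cs : List (List X), (∀ x ∈ cs, IsLS x) ∧
          List.Chain' (fun p q => ¬ llt q p) cs ∧ cs.flatten = c ∧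
          ∀ ci ∈ cs, llt ci u := by
  intro t
  induction t with
  | ih1 x =>
    intro hstd a u b hu hm
    by_cases ha : a = []
    · subst ha
      exact baseCase hstd hu (by simpa using hm)
    · exfalso
      have hlen := congrArg List.length hm
      simp [mword, List.length_append] at hlen
      have h1 : 1 ≤ a.length := List.length_pos_iff.mpr ha
      have h2 : 1 ≤ u.length := List.length_pos_iff.mpr hu.1
      omega
  | ih2 t1 t2 ih1 ih2 =>
    intro hstd a u b hu hm
    by_cases ha : a = []
    · subst ha
      exact baseCase hstd hu (by simpa using hm)
    obtain ⟨hstd1, hstd2, hLS12, hLS2, hmax⟩ := hstd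
    rw [show mword (t1 * t2) = mword t1 ++ mword t2 from rfl,
      List.append_assoc] at hm
    rcases List.append_eq_append_iff.mp hm with ⟨a', h1, h2⟩ | ⟨r, h1, h2⟩
    · obtain ⟨c, d, hb, s, hocc, hms, hcs⟩ := ih2 hstd2 a' u b hu
        (by rw [h2, List.append_assoc])
      exact ⟨c, d, hb, s, Or.inr (Or.inr ⟨a', hocc, h1⟩), hms, hcs⟩
    · rcases List.append_eq_append_iff.mp h2 with ⟨s0, hs1, hs2⟩ | ⟨u2, hu1, hu2⟩
      · obtain ⟨c, d1, hcd, s, hocc, hms, hcs⟩ := ih1 hstd1 a u s0 hu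
          (by rw [h1, hs1, List.append_assoc])
        refine ⟨c, d1 ++ mword t2, ?_, s, Or.inr (Or.inl hocc), hms, hcs⟩
        rw [hs2, hcd, List.append_assoc]
      · by_cases hr : r = []
        · subst hr
          simp at hu1 h1
          subst hu1
          exact ⟨b, [], by simp, t2, Or.inr (Or.inr ⟨[], occurs_self t2, by simp [h1]⟩),
            hu2, tailCFL hLS2 hu hu2⟩
        by_cases hu2e : u2 = []
        · subst hu2e
          simp at hu1 hu2
          subst hu1
          obtain ⟨c, d1, hcd, s, hocc, hms, hcs⟩ := ih1 hstd1 a u [] hu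
            (by rw [h1]; simp)
          have hc := List.append_eq_nil_iff.mp hcd.symm
          refine ⟨c, d1 ++ mword t2, ?_, s, Or.inr (Or.inl hocc), hms, hcs⟩
          rw [hc.1, hc.2]
          simp [hu2]
        · exfalso
          have hW : IsLS (r ++ (u2 ++ b)) := isLS_straddle hr hu2e (hu1 ▸ hu) (hu2 ▸ hLS2)
          have hWsuf : (r ++ mword t2) <:+ mword t1 ++ mword t2 :=
            ⟨a, by rw [← List.append_assoc, ← h1]⟩
          have hWne : r ++ mword t2 ≠ mword t1 ++ mword t2 := by
            intro h
            have hlen := congrArg List.length h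
            have hlen1 := congrArg List.length h1
            simp [List.length_append] at hlen hlen1
            have : 1 ≤ a.length := List.length_pos_iff.mpr ha
            omega
          have key := hmax (r ++ mword t2) (by simp [hr]) hWne hWsuf
            (by rw [hu2]; exact hW)
          have hlen : 1 ≤ r.length := List.length_pos_iff.mpr hr
          rw [List.length_append] at key
          omega

/-- If `u` is Lyndon--Shirshov and `w = a ++ u ++ b` is Lyndon--Shirshov properly
containing `u`, then in Shirshov's Lemma the subtree `[u c]` of the standard
bracketing of `w` matched to `u` satisfies: every factor of the Lyndon
factorization `c = c_1 ++ ... ++ c_k` is lexicographically smaller than `u`. -/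
theorem stmt_14 {w u a b : List X} (hw : IsLS w) (hu : IsLS u)
    (hfac : w = a ++ u ++ b) (hproper : ¬ (a = [] ∧ b = []))
    (t : FreeMagma X) (ht : mword t = w) (hstd : IsStd t) :
    ∃ c d : List X, b = c ++ d ∧
      ∃ s : FreeMagma X, Occurs s t a ∧ mword s = u ++ c ∧
        ∃ cs : List (List X), (∀ x ∈ cs, IsLS x) ∧
          List.Chain' (fun p q => ¬ llt q p) cs ∧ cs.flatten = c ∧
          ∀ ci ∈ cs, llt ci u := by
  exact shirshov_main t hstd a u b hu (ht.trans hfac)
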